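/- In the monitoring game, assume p_a = p_b = p with 1/3 ≤ p < 1/2 (so p_c = 1 − 2p ≤ p) and (1 − 2p)/(1 − p) < ν* < p/(1 − p). Consider the distribution λ over two-class partitions of {a,b,c} given by λ({{a,c},{b}}) = μ*, λ({{b,c},{a}}) = 1 − μ*, λ({{a,b},{c}}) = 0; the employer's strategy for each partition in the support: control (m = 1) every type in the class containing a and not control (m = 0) every type in the class containing b; and the worker: ζ = 1/2, i.e. e₁(c) = 1/2. Then: the aggregate control probability faced by type c equals μ* (so ζ = 1/2 is a worker best response); for each partition in the support of λ the employer's actions are best responses to the consistent expectations β₁; and both partitions in the support of λ are globally clustered with respect to the worker's behavior, i.e. each minimizes Σ_{ω} p_ω (e₁(ω) − β₁(α(ω)))² over all partitions of {a,b,c} into at most two nonempty classes. Hence this profile is a globally clustered distributional analogy-based expectation equilibrium. -/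

import Mathlib

/-- The three worker types of the monitoring game. -/
inductive Typ : Type
  | a | b | c
  deriving DecidableEq

instance : Fintype Typ :=
  ⟨{Typ.a, Typ.b, Typ.c}, fun x => by cases x <;> simp⟩

/-- Probabilities of the worker types. -/
noncomputable def pmap (pa pb pc : ℝ) : Typ → ℝ
  | .a => pa
  | .b => pb
  | .c => pc

/-- Probability of high effort of each worker type, when type `c` chooses low effort
with probability `ζ`. -/
noncomputable def emap (ζ : ℝ) : Typ → ℝ
  | .a => 0
  | .b => 1
  | .c => 1 - ζ

/-- The analogy class (fiber) of type `ω` under the two-class partition encoded by `g`. -/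
def cls (g : Typ → Bool) (ω : Typ) : Finset Typ :=
  Finset.univ.filter fun ω' => g ω' = g ω

/-- The employer's analogy-based expectation of high effort on the class `α`. -/
noncomputable def beta1 (p e : Typ → ℝ) (α : Finset Typ) : ℝ :=
  (∑ ω ∈ α, p ω * e ω) / ∑ ω ∈ α, p ω

/-- The partition `{{a,c},{b}}`: `a, c ↦ true`, `b ↦ false`. -/
def gac : Typ → Bool
  | .b => false
  | _ => true

/-- The partition `{{b,c},{a}}`: `b, c ↦ true`, `a ↦ false`. -/
def gbc : Typ → Bool
  | .a => false
  | _ => true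

/-- Employer control probabilities under partition `{{a,c},{b}}`:
control the class containing `a`, do not control the class containing `b`. -/
noncomputable def mac : Typ → ℝ
  | .b => 0
  | _ => 1

/-- Employer control probabilities under partition `{{b,c},{a}}`:
control the class containing `a`, do not control the class containing `b`. -/
noncomputable def mbc : Typ → ℝ
  | .a => 1
  | _ => 0

/-- Total weighted squared prediction error of the partition `g` given worker
behavior `e`. -/
noncomputable def Vtot (p e : Typ → ℝ) (g : Typ → Bool) : ℝ :=
  ∑ ω, p ω * (e ω - beta1 p e (cls g ω)) ^ 2

/-- **The unique globally clustered distributional ABEE of the monitoring game**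
(Proposition 5), for `p_a = p_b = p` with `1/3 ≤ p < 1/2` (so `p_c = 1 - 2p ≤ p`) and
`(1-2p)/(1-p) < ν* < p/(1-p)`.

With `λ({{a,c},{b}}) = μ*`, `λ({{b,c},{a}}) = 1 - μ*` (and `λ({{a,b},{c}}) = 0`), the
employer controlling the class containing `a` and not the class containing `b`, and the
`c` worker choosing `e = 0` and `e = 1` each with probability `1/2`:
the aggregate control probability faced by type `c` equals `μ*` (so `ζ = 1/2` is a worker
best response), for each partition in the support the employer's actions are best
responses to the consistent expectations `β₁`, and both partitions in the support are
globally clustered with respect to the worker's behavior. -/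
lemma sum_typ (f : Typ → ℝ) : ∑ ω, f ω = f .a + f .b + f .c := by
  show Finset.sum _ f = _
  rw [show (Finset.univ : Finset Typ) = {Typ.a, Typ.b, Typ.c} from rfl]
  simp [Finset.sum_insert, Finset.mem_insert]; ring

lemma sum_pair (x y : Typ) (h : x ≠ y) (f : Typ → ℝ) :
    ∑ ω ∈ ({x, y} : Finset Typ), f ω = f x + f y := by
  simp [Finset.sum_insert, h]

lemma Vtot_eq (P E : Typ → ℝ) (g : Typ → Bool) :
    Vtot P E g = P .a * (E .a - beta1 P E (cls g .a)) ^ 2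
      + P .b * (E .b - beta1 P E (cls g .b)) ^ 2
      + P .c * (E .c - beta1 P E (cls g .c)) ^ 2 := by
  rw [Vtot, sum_typ]

set_option maxHeartbeats 2000000 in
theorem monitoring_globally_clustered_distributional_ABEE
    (p : ℝ) (hp1 : 1 / 3 ≤ p) (hp2 : p < 1 / 2)
    (μs νs : ℝ) (hμ0 : 0 < μs) (hμ1 : μs < 1)
    (hν_lo : (1 - 2 * p) / (1 - p) < νs) (hν_hi : νs < p / (1 - p)) :
    (μs * mac Typ.c + (1 - μs) * mbc Typ.c = μs) ∧
    (∀ ω, (beta1 (pmap p p (1 - 2 * p)) (emap (1 / 2)) (cls gac ω) < νs ∧ mac ω = 1) ∨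
          (νs < beta1 (pmap p p (1 - 2 * p)) (emap (1 / 2)) (cls gac ω) ∧ mac ω = 0)) ∧
    (∀ ω, (beta1 (pmap p p (1 - 2 * p)) (emap (1 / 2)) (cls gbc ω) < νs ∧ mbc ω = 1) ∨
          (νs < beta1 (pmap p p (1 - 2 * p)) (emap (1 / 2)) (cls gbc ω) ∧ mbc ω = 0)) ∧
    (∀ g' : Typ → Bool,
      Vtot (pmap p p (1 - 2 * p)) (emap (1 / 2)) gac ≤
        Vtot (pmap p p (1 - 2 * p)) (emap (1 / 2)) g') ∧
    (∀ g' : Typ → Bool,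
      Vtot (pmap p p (1 - 2 * p)) (emap (1 / 2)) gbc ≤
        Vtot (pmap p p (1 - 2 * p)) (emap (1 / 2)) g') := by
  have h1p : (0:ℝ) < 1 - p := by linarith
  have hq : (0:ℝ) < 1 - 2 * p := by linarith
  have hp0 : (0:ℝ) < p := by linarith
  have h2p : (0:ℝ) < 2 * (1 - p) := by linarith
  have hν0 : 0 < νs := lt_trans (by positivity) hν_lo
  have hν1 : νs < 1 := by
    have : p / (1 - p) < 1 := by rw [div_lt_one h1p]; linarith
    linarith
  -- β₁ values
  have hβac : beta1 (pmap p p (1 - 2 * p)) (emap (1 / 2)) {Typ.a, Typ.c}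
      = (1 - 2 * p) / (2 * (1 - p)) := by
    rw [beta1, sum_pair _ _ (by decide), sum_pair _ _ (by decide)]
    simp only [pmap, emap]
    rw [div_eq_div_iff (by linarith) h2p.ne']; ring
  have hβbc : beta1 (pmap p p (1 - 2 * p)) (emap (1 / 2)) {Typ.b, Typ.c}
      = 1 / (2 * (1 - p)) := by
    rw [beta1, sum_pair _ _ (by decide), sum_pair _ _ (by decide)]
    simp only [pmap, emap]
    rw [div_eq_div_iff (by linarith) h2p.ne']; ring
  have hβab : beta1 (pmap p p (1 - 2 * p)) (emap (1 / 2)) {Typ.a, Typ.b}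
      = 1 / 2 := by
    rw [beta1, sum_pair _ _ (by decide), sum_pair _ _ (by decide)]
    simp only [pmap, emap]
    rw [div_eq_div_iff (by linarith) (by norm_num)]; ring
  have hβa : beta1 (pmap p p (1 - 2 * p)) (emap (1 / 2)) {Typ.a} = 0 := by
    simp [beta1, pmap, emap]
  have hβb : beta1 (pmap p p (1 - 2 * p)) (emap (1 / 2)) {Typ.b} = 1 := by
    simp [beta1, pmap, emap]
    exact hp0.ne'
  have hβc : beta1 (pmap p p (1 - 2 * p)) (emap (1 / 2)) {Typ.c} = 1 / 2 := by
    rw [beta1, Finset.sum_singleton, Finset.sum_singleton]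
    simp only [pmap, emap]
    rw [div_eq_div_iff hq.ne' (by norm_num)]; ring
  have hβuniv : beta1 (pmap p p (1 - 2 * p)) (emap (1 / 2)) Finset.univ = 1 / 2 := by
    rw [beta1, sum_typ, sum_typ]
    simp only [pmap, emap]
    rw [div_eq_div_iff (by linarith) (by norm_num)]; ring
  -- key inequalities
  have hacν : (1 - 2 * p) / (2 * (1 - p)) < νs :=
    calc (1 - 2 * p) / (2 * (1 - p)) < (1 - 2 * p) / (1 - p) := by
          rw [div_lt_div_iff₀ h2p h1p]; nlinarith
      _ < νs := hν_lo
  have hbcν : νs < 1 / (2 * (1 - p)) :=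
    calc νs < p / (1 - p) := hν_hi
      _ < 1 / (2 * (1 - p)) := by
          rw [div_lt_div_iff₀ h1p h2p]; nlinarith
  -- Vtot values on the two equilibrium partitions
  have Vac : Vtot (pmap p p (1 - 2 * p)) (emap (1 / 2)) gac
      = p * (1 - 2 * p) / (4 * (1 - p)) := by
    rw [Vtot_eq,
        show cls gac Typ.a = {Typ.a, Typ.c} from by decide,
        show cls gac Typ.b = {Typ.b} from by decide,
        show cls gac Typ.c = {Typ.a, Typ.c} from by decide, hβac, hβb]
    simp only [pmap, emap]
    field_simp
    ring
  have Vbc : Vtot (pmap p p (1 - 2 * p)) (emap (1 / 2)) gbc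
      = p * (1 - 2 * p) / (4 * (1 - p)) := by
    rw [Vtot_eq,
        show cls gbc Typ.a = {Typ.a} from by decide,
        show cls gbc Typ.b = {Typ.b, Typ.c} from by decide,
        show cls gbc Typ.c = {Typ.b, Typ.c} from by decide, hβbc, hβa]
    simp only [pmap, emap]
    field_simp
    ring
  -- the minimization property
  have key : ∀ g' : Typ → Bool,
      p * (1 - 2 * p) / (4 * (1 - p)) ≤
        Vtot (pmap p p (1 - 2 * p)) (emap (1 / 2)) g' := by
    intro g'
    have clsA : ∀ (s : Finset Typ), (∀ x, (x ∈ s ↔ g' x = g' Typ.a)) →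
        cls g' Typ.a = s := by
      intro s hs
      apply Finset.ext; intro x
      simp only [cls, Finset.mem_filter, Finset.mem_univ, true_and, hs x]
    have clsB : ∀ (s : Finset Typ), (∀ x, (x ∈ s ↔ g' x = g' Typ.b)) →
        cls g' Typ.b = s := by
      intro s hs
      apply Finset.ext; intro x
      simp only [cls, Finset.mem_filter, Finset.mem_univ, true_and, hs x]
    have clsC : ∀ (s : Finset Typ), (∀ x, (x ∈ s ↔ g' x = g' Typ.c)) →
        cls g' Typ.c = s := by
      intro s hs
      apply Finset.ext; intro x
      simp only [cls, Finset.mem_filter, Finset.mem_univ, true_and, hs x]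
    rcases Bool.eq_false_or_eq_true (g' Typ.a) with ha | ha <;>
    rcases Bool.eq_false_or_eq_true (g' Typ.b) with hb | hb <;>
    rcases Bool.eq_false_or_eq_true (g' Typ.c) with hc | hc
    -- F F F : one class
    · rw [Vtot_eq,
          clsA Finset.univ (by intro x; cases x <;> simp [ha, hb, hc]),
          clsB Finset.univ (by intro x; cases x <;> simp [ha, hb, hc]),
          clsC Finset.univ (by intro x; cases x <;> simp [ha, hb, hc]), hβuniv]
      simp only [pmap, emap]
      rw [div_le_iff₀ (by positivity)]
      nlinarith
    -- F F T : {a,b},{c}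
    · rw [Vtot_eq,
          clsA {Typ.a, Typ.b} (by intro x; cases x <;> simp [ha, hb, hc]),
          clsB {Typ.a, Typ.b} (by intro x; cases x <;> simp [ha, hb, hc]),
          clsC {Typ.c} (by intro x; cases x <;> simp [ha, hb, hc]), hβab, hβc]
      simp only [pmap, emap]
      rw [div_le_iff₀ (by positivity)]
      nlinarith
    -- F T F : {a,c},{b}
    · rw [Vtot_eq,
          clsA {Typ.a, Typ.c} (by intro x; cases x <;> simp [ha, hb, hc]),
          clsB {Typ.b} (by intro x; cases x <;> simp [ha, hb, hc]),
          clsC {Typ.a, Typ.c} (by intro x; cases x <;> simp [ha, hb, hc]), hβac, hβb]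
      simp only [pmap, emap]
      refine le_of_eq ?_
      field_simp
      ring
    -- F T T : {a},{b,c}
    · rw [Vtot_eq,
          clsA {Typ.a} (by intro x; cases x <;> simp [ha, hb, hc]),
          clsB {Typ.b, Typ.c} (by intro x; cases x <;> simp [ha, hb, hc]),
          clsC {Typ.b, Typ.c} (by intro x; cases x <;> simp [ha, hb, hc]), hβbc, hβa]
      simp only [pmap, emap]
      refine le_of_eq ?_
      field_simp
      ring
    -- T F F : {a},{b,c}
    · rw [Vtot_eq,
          clsA {Typ.a} (by intro x; cases x <;> simp [ha, hb, hc]),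
          clsB {Typ.b, Typ.c} (by intro x; cases x <;> simp [ha, hb, hc]),
          clsC {Typ.b, Typ.c} (by intro x; cases x <;> simp [ha, hb, hc]), hβbc, hβa]
      simp only [pmap, emap]
      refine le_of_eq ?_
      field_simp
      ring
    -- T F T : {a,c},{b}
    · rw [Vtot_eq,
          clsA {Typ.a, Typ.c} (by intro x; cases x <;> simp [ha, hb, hc]),
          clsB {Typ.b} (by intro x; cases x <;> simp [ha, hb, hc]),
          clsC {Typ.a, Typ.c} (by intro x; cases x <;> simp [ha, hb, hc]), hβac, hβb]
      simp only [pmap, emap]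
      refine le_of_eq ?_
      field_simp
      ring
    -- T T F : {a,b},{c}
    · rw [Vtot_eq,
          clsA {Typ.a, Typ.b} (by intro x; cases x <;> simp [ha, hb, hc]),
          clsB {Typ.a, Typ.b} (by intro x; cases x <;> simp [ha, hb, hc]),
          clsC {Typ.c} (by intro x; cases x <;> simp [ha, hb, hc]), hβab, hβc]
      simp only [pmap, emap]
      rw [div_le_iff₀ (by positivity)]
      nlinarith
    -- T T T : one class
    · rw [Vtot_eq,
          clsA Finset.univ (by intro x; cases x <;> simp [ha, hb, hc]),
          clsB Finset.univ (by intro x; cases x <;> simp [ha, hb, hc]),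
          clsC Finset.univ (by intro x; cases x <;> simp [ha, hb, hc]), hβuniv]
      simp only [pmap, emap]
      rw [div_le_iff₀ (by positivity)]
      nlinarith
  refine ⟨by simp [mac, mbc], ?_, ?_, ?_, ?_⟩
  · intro ω
    cases ω
    · exact Or.inl ⟨by rw [show cls gac Typ.a = {Typ.a, Typ.c} from by decide, hβac]
                       exact hacν, rfl⟩
    · exact Or.inr ⟨by rw [show cls gac Typ.b = {Typ.b} from by decide, hβb]
                       exact hν1, rfl⟩
    · exact Or.inl ⟨by rw [show cls gac Typ.c = {Typ.a, Typ.c} from by decide, hβac]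
                       exact hacν, rfl⟩
  · intro ω
    cases ω
    · exact Or.inl ⟨by rw [show cls gbc Typ.a = {Typ.a} from by decide, hβa]
                       exact hν0, rfl⟩
    · exact Or.inr ⟨by rw [show cls gbc Typ.b = {Typ.b, Typ.c} from by decide, hβbc]
                       exact hbcν, rfl⟩
    · exact Or.inr ⟨by rw [show cls gbc Typ.c = {Typ.b, Typ.c} from by decide, hβbc]
                       exact hbcν, rfl⟩
  · intro g'; rw [Vac]; exact key g'
  · intro g'; rw [Vbc]; exact key g'
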